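/- The ES-LM flux with the low Mach number modification is entropy stable: for all admissible states q⁻, q⁺, every admissible intermediate state q_int, and every cut-off parameter M_cut ∈ [0,1], the flux F^{ES-LM}(q⁻, q⁺) := F*(q⁻, q⁺) − ½ Q_LM(q_int)(r(q⁺) − r(q⁻)) with Q_LM(q_int) := R |Λ|^Roe_LM S Rᵀ evaluated at q_int, |Λ|^Roe_LM := diag(|u−c̃|, |u|, |u|, |u+c̃|) and c̃ := c · max(min(M, 1), M_cut), M := √(u²+v²)/c, satisfies (r(q⁺) − r(q⁻)) · F^{ES-LM}(q⁻, q⁺) ≤ ρ⁺u⁺ − ρ⁻u⁻. -/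

import Mathlib

open Real Matrix

noncomputable section

/-- A state of the 2D compressible Euler equations: `(ρ, ρu, ρv, E)`. -/
abbrev EulerState := Fin 4 → ℝ

/-- Density. -/
def rho (q : EulerState) : ℝ := q 0
/-- x-momentum. -/
def mom1 (q : EulerState) : ℝ := q 1
/-- y-momentum. -/
def mom2 (q : EulerState) : ℝ := q 2
/-- Total energy. -/
def toten (q : EulerState) : ℝ := q 3
/-- Pressure `p = (γ-1)(E - (m₁² + m₂²)/(2ρ))`. -/
def pres (γ : ℝ) (q : EulerState) : ℝ :=
  (γ - 1) * (toten q - (mom1 q ^ 2 + mom2 q ^ 2) / (2 * rho q))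
/-- x-velocity `u = m₁/ρ`. -/
def uvel (q : EulerState) : ℝ := mom1 q / rho q
/-- y-velocity `v = m₂/ρ`. -/
def vvel (q : EulerState) : ℝ := mom2 q / rho q
/-- Admissible states: positive density and positive pressure. -/
def admissible (γ : ℝ) (q : EulerState) : Prop := 0 < rho q ∧ 0 < pres γ q
/-- Physical entropy `s = ln(p ρ^(-γ))`. -/
def entS (γ : ℝ) (q : EulerState) : ℝ := Real.log (pres γ q * rho q ^ (-γ))
/-- Entropy function `U = -ρ s/(γ-1)`. -/
def entU (γ : ℝ) (q : EulerState) : ℝ := -(rho q * entS γ q) / (γ - 1)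
/-- `β = ρ/(2p)`. -/
def betaCoef (γ : ℝ) (q : EulerState) : ℝ := rho q / (2 * pres γ q)
/-- Entropy variables `r(q)`. -/
def entVar (γ : ℝ) (q : EulerState) : EulerState :=
  ![(γ - entS γ q) / (γ - 1) - betaCoef γ q * (uvel q ^ 2 + vvel q ^ 2),
    2 * betaCoef γ q * uvel q,
    2 * betaCoef γ q * vvel q,
    -2 * betaCoef γ q]
/-- x-flux `f(q)`. -/
def fFlux (γ : ℝ) (q : EulerState) : EulerState :=
  ![rho q * uvel q,
    rho q * uvel q ^ 2 + pres γ q,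
    rho q * uvel q * vvel q,
    (toten q + pres γ q) * uvel q]
/-- y-flux `g(q)`. -/
def gFlux (γ : ℝ) (q : EulerState) : EulerState :=
  ![rho q * vvel q,
    rho q * uvel q * vvel q,
    rho q * vvel q ^ 2 + pres γ q,
    (toten q + pres γ q) * vvel q]
/-- x-entropy flux `φₓ = -ρ u s/(γ-1)`. -/
def phiX (γ : ℝ) (q : EulerState) : ℝ := -(rho q * uvel q * entS γ q) / (γ - 1)
/-- y-entropy flux `φ_y = -ρ v s/(γ-1)`. -/
def phiY (γ : ℝ) (q : EulerState) : ℝ := -(rho q * vvel q * entS γ q) / (γ - 1)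

/-- Logarithmic mean `(b-a)/(ln b - ln a)`, equal to `a` when `a = b`. -/
def logMean (a b : ℝ) : ℝ := if a = b then a else (b - a) / (Real.log b - Real.log a)

/-- The entropy conservative flux of Chandrashekar. -/
def chandrashekarFlux (γ : ℝ) (qm qp : EulerState) : EulerState :=
  let ρhat := logMean (rho qm) (rho qp)
  let ubar := (uvel qm + uvel qp) / 2
  let vbar := (vvel qm + vvel qp) / 2
  let βbar := (betaCoef γ qm + betaCoef γ qp) / 2
  let βhat := logMean (betaCoef γ qm) (betaCoef γ qp)
  let ρbar := (rho qm + rho qp) / 2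
  let ptil := ρbar / (2 * βbar)
  let vsqbar := (uvel qm ^ 2 + vvel qm ^ 2 + uvel qp ^ 2 + vvel qp ^ 2) / 2
  let Fρ := ρhat * ubar
  let Fρu := ubar * Fρ + ptil
  let Fρv := vbar * Fρ
  ![Fρ, Fρu, Fρv,
    (1 / (2 * (γ - 1) * βhat) - vsqbar / 2) * Fρ + ubar * Fρu + vbar * Fρv]

/-- Speed of sound `c = √(γ p/ρ)`. -/
def cSound (γ : ℝ) (q : EulerState) : ℝ := Real.sqrt (γ * pres γ q / rho q)
/-- Enthalpy `H = c²/(γ-1) + |v|²/2`. -/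
def enthalpyH (γ : ℝ) (q : EulerState) : ℝ :=
  cSound γ q ^ 2 / (γ - 1) + (uvel q ^ 2 + vvel q ^ 2) / 2
/-- The matrix `R` of right eigenvectors of the x-flux Jacobian. -/
def eigMat (γ : ℝ) (q : EulerState) : Matrix (Fin 4) (Fin 4) ℝ :=
  !![1, 1, 0, 1;
     uvel q - cSound γ q, uvel q, 0, uvel q + cSound γ q;
     vvel q, vvel q, -1, vvel q;
     enthalpyH γ q - cSound γ q * uvel q, (uvel q ^ 2 + vvel q ^ 2) / 2, -vvel q,
       enthalpyH γ q + cSound γ q * uvel q]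
/-- Barth's scaling matrix `S = diag(ρ/(2γ), (γ-1)ρ/γ, p, ρ/(2γ))`. -/
def scalMat (γ : ℝ) (q : EulerState) : Matrix (Fin 4) (Fin 4) ℝ :=
  Matrix.diagonal ![rho q / (2 * γ), (γ - 1) * rho q / γ, pres γ q, rho q / (2 * γ)]

/-- Entropy diffusion matrix `Q = R |Λ| S Rᵀ` for a diagonal `|Λ| = diag lam`. -/
def Qmat (γ : ℝ) (lam : Fin 4 → ℝ) (q : EulerState) : Matrix (Fin 4) (Fin 4) ℝ :=
  eigMat γ q * Matrix.diagonal lam * scalMat γ q * (eigMat γ q)ᵀ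

/-- Roe eigenvalues `(|u-c|, |u|, |u|, |u+c|)`. -/
def lamRoe (γ : ℝ) (q : EulerState) : Fin 4 → ℝ :=
  ![|uvel q - cSound γ q|, |uvel q|, |uvel q|, |uvel q + cSound γ q|]
/-- Kinetic energy stable eigenvalues `(|u|+c, |u|, |u|, |u|+c)`. -/
def lamKES (γ : ℝ) (q : EulerState) : Fin 4 → ℝ :=
  ![|uvel q| + cSound γ q, |uvel q|, |uvel q|, |uvel q| + cSound γ q]
/-- Local Mach number `M = |v|/c`. -/
def machNum (γ : ℝ) (q : EulerState) : ℝ :=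
  Real.sqrt (uvel q ^ 2 + vvel q ^ 2) / cSound γ q
/-- Rescaled speed of sound `c̃ = c max(min(M,1), M_cut)`. -/
def cTilde (γ Mcut : ℝ) (q : EulerState) : ℝ :=
  cSound γ q * max (min (machNum γ q) 1) Mcut
/-- Low Mach Roe eigenvalues `(|u-c̃|, |u|, |u|, |u+c̃|)`. -/
def lamRoeLM (γ Mcut : ℝ) (q : EulerState) : Fin 4 → ℝ :=
  ![|uvel q - cTilde γ Mcut q|, |uvel q|, |uvel q|, |uvel q + cTilde γ Mcut q|]
/-- Low Mach KES eigenvalues `(|u|+c̃, |u|, |u|, |u|+c̃)`. -/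
def lamKESLM (γ Mcut : ℝ) (q : EulerState) : Fin 4 → ℝ :=
  ![|uvel q| + cTilde γ Mcut q, |uvel q|, |uvel q|, |uvel q| + cTilde γ Mcut q]


set_option maxHeartbeats 4000000 in
lemma chandra_atoms (γ ρ1 ρ2 b1 b2 u1 u2 v1 v2 lr1 lr2 lp1 lp2 ρh bh : ℝ)
    (hγ1 : γ - 1 ≠ 0) (hb1 : b1 ≠ 0) (hbb : b1 + b2 ≠ 0) (hbh0 : bh ≠ 0)
    (hρh : ρh * (lr2 - lr1) = ρ2 - ρ1)
    (hbh : bh * ((lr2 - lp2) - (lr1 - lp1)) = b2 - b1) :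
    ((γ - (lp2 - γ * lr2)) / (γ - 1) - b2 * (u2 ^ 2 + v2 ^ 2)
        - ((γ - (lp1 - γ * lr1)) / (γ - 1) - b1 * (u1 ^ 2 + v1 ^ 2)))
        * (ρh * ((u1 + u2) / 2))
      + (2 * b2 * u2 - 2 * b1 * u1)
        * ((u1 + u2) / 2 * (ρh * ((u1 + u2) / 2)) + (ρ1 + ρ2) / 2 / (2 * ((b1 + b2) / 2)))
      + (2 * b2 * v2 - 2 * b1 * v1) * ((v1 + v2) / 2 * (ρh * ((u1 + u2) / 2)))
      + (-2 * b2 - -2 * b1)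
        * ((1 / (2 * (γ - 1) * bh) - (u1 ^ 2 + v1 ^ 2 + u2 ^ 2 + v2 ^ 2) / 2 / 2)
              * (ρh * ((u1 + u2) / 2))
            + (u1 + u2) / 2 * ((u1 + u2) / 2 * (ρh * ((u1 + u2) / 2))
                + (ρ1 + ρ2) / 2 / (2 * ((b1 + b2) / 2)))
            + (v1 + v2) / 2 * ((v1 + v2) / 2 * (ρh * ((u1 + u2) / 2))))
      = ρ2 * u2 - ρ1 * u1 := by
  rcases eq_or_ne (lr2 - lr1) 0 with h1 | h1
  · have hρ : ρ2 = ρ1 := by rw [h1, mul_zero] at hρh; linarith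
    have hlr : lr2 = lr1 := by linarith [sub_eq_zero.mp h1]
    rw [hρ, hlr]
    rw [hlr] at hbh
    rcases eq_or_ne (lp2 - lp1) 0 with h2 | h2
    · have hb : b2 = b1 := by
        have : (lr1 - lp2) - (lr1 - lp1) = 0 := by linarith [sub_eq_zero.mp h2]
        rw [this, mul_zero] at hbh; linarith
      have hlp : lp2 = lp1 := sub_eq_zero.mp h2
      rw [hb, hlp]
      field_simp
      ring
    · have hΔb : b2 - b1 ≠ 0 := by
        rw [← hbh]
        exact mul_ne_zero hbh0 (by intro hc; apply h2; linarith)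
      have hbhv : bh = (b2 - b1) / ((lr1 - lp2) - (lr1 - lp1)) := by
        have hne : lp1 - lp2 ≠ 0 := fun hc => h2 (by linarith)
        rw [← hbh]; field_simp; exact (div_self (by intro hc; apply hne; linarith)).symm
      rw [hbhv]
      have h2' : (lr1 - lp2) - (lr1 - lp1) ≠ 0 := by intro hc; apply h2; linarith
      field_simp
      ring
  · have hρhv : ρh = (ρ2 - ρ1) / (lr2 - lr1) := by field_simp; linarith
    rw [hρhv]
    rcases eq_or_ne ((lr2 - lp2) - (lr1 - lp1)) 0 with h2 | h2
    · have hb : b2 = b1 := by rw [h2, mul_zero] at hbh; linarith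
      have hlp : lp2 = lr2 - lr1 + lp1 := by linarith
      rw [hb, hlp]
      field_simp
      ring
    · have hΔb : b2 - b1 ≠ 0 := by rw [← hbh]; exact mul_ne_zero hbh0 h2
      have hbhv : bh = (b2 - b1) / ((lr2 - lp2) - (lr1 - lp1)) := by
        rw [← hbh]; field_simp
      rw [hbhv]
      field_simp
      ring

lemma log_sub_ne_of_ne {a b : ℝ} (ha : 0 < a) (hb : 0 < b) (h : a ≠ b) :
    Real.log b - Real.log a ≠ 0 := by
  intro hc
  exact h (Real.log_injOn_pos (Set.mem_Ioi.2 ha) (Set.mem_Ioi.2 hb) (by linarith))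

lemma logMean_rel {a b : ℝ} (ha : 0 < a) (hb : 0 < b) :
    logMean a b * (Real.log b - Real.log a) = b - a := by
  unfold logMean
  rcases eq_or_ne a b with rfl | h
  · simp
  · rw [if_neg h, div_mul_cancel₀ _ (log_sub_ne_of_ne ha hb h)]

lemma logMean_pos {a b : ℝ} (ha : 0 < a) (hb : 0 < b) : 0 < logMean a b := by
  unfold logMean
  rcases eq_or_ne a b with rfl | h
  · simpa using ha
  · rw [if_neg h]
    rcases lt_or_gt_of_ne h with hlt | hlt
    · exact div_pos (by linarith) (by simpa [sub_pos] using Real.log_lt_log ha hlt)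
    · have h1 : Real.log b < Real.log a := Real.log_lt_log hb hlt
      exact div_pos_of_neg_of_neg (by linarith) (by linarith)

lemma betaCoef_pos {γ : ℝ} {q : EulerState} (hq : admissible γ q) : 0 < betaCoef γ q :=
  div_pos hq.1 (by linarith [hq.2])

lemma entS_eq {γ : ℝ} {q : EulerState} (hq : admissible γ q) :
    entS γ q = Real.log (pres γ q) - γ * Real.log (rho q) := by
  unfold entS
  rw [Real.log_mul (ne_of_gt hq.2) (ne_of_gt (Real.rpow_pos_of_pos hq.1 _)),
    Real.log_rpow hq.1]
  ring

/-- Entropy conservation of the Chandrashekar flux. -/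
lemma chandra_ec (γ : ℝ) (hγ : 1 < γ) (qm qp : EulerState)
    (hm : admissible γ qm) (hp : admissible γ qp) :
    (entVar γ qp - entVar γ qm) ⬝ᵥ chandrashekarFlux γ qm qp
      = rho qp * uvel qp - rho qm * uvel qm := by
  have hβm := betaCoef_pos hm
  have hβp := betaCoef_pos hp
  have hρh : logMean (rho qm) (rho qp) * (Real.log (rho qp) - Real.log (rho qm))
      = rho qp - rho qm := logMean_rel hm.1 hp.1
  have hlβm : Real.log (betaCoef γ qm)
      = Real.log (rho qm) - (Real.log 2 + Real.log (pres γ qm)) := by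
    unfold betaCoef
    rw [Real.log_div (ne_of_gt hm.1) (ne_of_gt (by linarith [hm.2] : (0:ℝ) < 2 * pres γ qm)),
      Real.log_mul two_ne_zero (ne_of_gt hm.2)]
  have hlβp : Real.log (betaCoef γ qp)
      = Real.log (rho qp) - (Real.log 2 + Real.log (pres γ qp)) := by
    unfold betaCoef
    rw [Real.log_div (ne_of_gt hp.1) (ne_of_gt (by linarith [hp.2] : (0:ℝ) < 2 * pres γ qp)),
      Real.log_mul two_ne_zero (ne_of_gt hp.2)]
  have hbh : logMean (betaCoef γ qm) (betaCoef γ qp)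
        * ((Real.log (rho qp) - Real.log (pres γ qp))
            - (Real.log (rho qm) - Real.log (pres γ qm)))
      = betaCoef γ qp - betaCoef γ qm := by
    have h2 : (Real.log (rho qp) - Real.log (pres γ qp))
        - (Real.log (rho qm) - Real.log (pres γ qm))
        = Real.log (betaCoef γ qp) - Real.log (betaCoef γ qm) := by
      rw [hlβp, hlβm]; ring
    rw [h2]
    exact logMean_rel hβm hβp
  simp only [chandrashekarFlux, entVar, dotProduct, Fin.sum_univ_four, Pi.sub_apply,
    Matrix.cons_val_zero, Matrix.cons_val_one, Matrix.head_cons, Matrix.cons_val_two,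
    Matrix.tail_cons, Matrix.cons_val_three, Matrix.cons_val_fin_one]
  rw [entS_eq hm, entS_eq hp]
  linear_combination chandra_atoms γ (rho qm) (rho qp) (betaCoef γ qm) (betaCoef γ qp)
    (uvel qm) (uvel qp) (vvel qm) (vvel qp)
    (Real.log (rho qm)) (Real.log (rho qp)) (Real.log (pres γ qm)) (Real.log (pres γ qp))
    (logMean (rho qm) (rho qp)) (logMean (betaCoef γ qm) (betaCoef γ qp))
    (by linarith) (ne_of_gt hβm) (by positivity)
    (ne_of_gt (logMean_pos hβm hβp)) hρh hbh

lemma quad_form_nonneg {n : ℕ} (R : Matrix (Fin n) (Fin n) ℝ) (d : Fin n → ℝ)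
    (hd : ∀ i, 0 ≤ d i) (x : Fin n → ℝ) :
    0 ≤ x ⬝ᵥ (R * Matrix.diagonal d * Rᵀ).mulVec x := by
  have h1 : (R * Matrix.diagonal d * Rᵀ).mulVec x
      = R.mulVec ((Matrix.diagonal d).mulVec (Rᵀ.mulVec x)) := by
    rw [Matrix.mulVec_mulVec, Matrix.mulVec_mulVec, Matrix.mul_assoc]
  rw [h1, Matrix.dotProduct_mulVec, ← Matrix.mulVec_transpose]
  unfold dotProduct
  refine Finset.sum_nonneg fun i _ => ?_
  rw [Matrix.mulVec_diagonal]
  have := hd i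
  nlinarith [sq_nonneg (Rᵀ.mulVec x i)]

lemma Qmat_nonneg (γ : ℝ) (hγ : 1 < γ) (lam : Fin 4 → ℝ) (hlam : ∀ i, 0 ≤ lam i)
    (q : EulerState) (hq : admissible γ q) (x : Fin 4 → ℝ) :
    0 ≤ x ⬝ᵥ (Qmat γ lam q).mulVec x := by
  have hdiag : Qmat γ lam q = eigMat γ q
      * Matrix.diagonal (lam * ![rho q / (2 * γ), (γ - 1) * rho q / γ, pres γ q, rho q / (2 * γ)])
      * (eigMat γ q)ᵀ := by
    unfold Qmat scalMat
    rw [Matrix.mul_assoc (eigMat γ q), Matrix.diagonal_mul_diagonal]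
    rfl
  rw [hdiag]
  refine quad_form_nonneg _ _ (fun i => ?_) x
  have hρ := hq.1
  have hp := hq.2
  have h2γ : (0:ℝ) < 2 * γ := by linarith
  fin_cases i <;>
    simp only [Pi.mul_apply, Matrix.cons_val_zero, Matrix.cons_val_one, Matrix.head_cons,
      Matrix.cons_val_two, Matrix.tail_cons, Matrix.cons_val_three] <;>
    refine mul_nonneg (hlam _) ?_
  · exact le_of_lt (div_pos hρ h2γ)
  · exact le_of_lt (div_pos (by nlinarith) (by linarith))
  · exact le_of_lt hp
  · exact le_of_lt (div_pos hρ h2γ)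

lemma lamRoeLM_nonneg (γ Mcut : ℝ) (q : EulerState) : ∀ i, 0 ≤ lamRoeLM γ Mcut q i := by
  intro i
  fin_cases i <;>
    simp only [lamRoeLM, Matrix.cons_val_zero, Matrix.cons_val_one, Matrix.head_cons,
      Matrix.cons_val_two, Matrix.tail_cons, Matrix.cons_val_three] <;>
    exact abs_nonneg _

/-- the low Mach modified ES-LM flux
`F^{ES-LM} = F* − ½ Q_LM(q_int)(r(q⁺) − r(q⁻))` with
`Q_LM = R |Λ|^Roe_LM S Rᵀ`, `|Λ|^Roe_LM = diag(|u−c̃|,|u|,|u|,|u+c̃|)`,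
`c̃ = c·max(min(M,1),M_cut)`, is entropy stable. -/
theorem es_lm_flux_entropy_stable (γ Mcut : ℝ) (hγ : 1 < γ)
    (hMcut : Mcut ∈ Set.Icc (0 : ℝ) 1)
    (qm qp qint : EulerState) (hm : admissible γ qm) (hp : admissible γ qp)
    (hint : admissible γ qint) :
    (entVar γ qp - entVar γ qm) ⬝ᵥ
        (chandrashekarFlux γ qm qp
          - (1 / 2 : ℝ) •
            (Qmat γ (lamRoeLM γ Mcut qint) qint).mulVec (entVar γ qp - entVar γ qm))
      ≤ rho qp * uvel qp - rho qm * uvel qm := by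
  rw [dotProduct_sub, chandra_ec γ hγ qm qp hm hp, dotProduct_smul,
    smul_eq_mul]
  have hQ := Qmat_nonneg γ hγ (lamRoeLM γ Mcut qint) (lamRoeLM_nonneg γ Mcut qint) qint hint
    (entVar γ qp - entVar γ qm)
  linarith
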